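/- Let H be a Hopf algebra over a field k with bijective antipode S, τ a Hopf algebra automorphism of H of finite order r, and (V, ρ) a finite-dimensional left H-module with e = exp_τ(V) finite. Then for every integer ℓ ≥ 0 and every h ∈ H, the shifted twisted power acts trivially: ρ(μ^{er} ∘ ((S⁻²τ)^ℓ ⊗ (S⁻²τ)^{ℓ+1} ⊗ ⋯ ⊗ (S⁻²τ)^{ℓ+er-1}) ∘ Δ^{er-1}(h)) = ε(h)·Id_V. -/

import Mathlib

open scoped TensorProduct

noncomputable section

namespace TwistedExponent

variable (k H : Type*) [CommRing k] [Ring H] [HopfAlgebra k H]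

/-- The convolution product of two linear endomorphisms of a bialgebra:
`f * g = μ ∘ (f ⊗ g) ∘ Δ`. -/
def conv (f g : H →ₗ[k] H) : H →ₗ[k] H :=
  LinearMap.mul' k H ∘ₗ TensorProduct.map f g ∘ₗ Coalgebra.comul

/-- The convolution unit `η ∘ ε`, i.e. `h ↦ ε(h)·1`. -/
def convOne : H →ₗ[k] H := Algebra.linearMap k H ∘ₗ Coalgebra.counit

/-- `gammaFrom T ℓ m` is the shifted map
`μ^m ∘ (T^ℓ ⊗ T^{ℓ+1} ⊗ ⋯ ⊗ T^{ℓ+m-1}) ∘ Δ^{m-1}`, expressed as the convolution product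
`T^ℓ * T^{ℓ+1} * ⋯ * T^{ℓ+m-1}` (with value the convolution unit for `m = 0`). -/
def gammaFrom (T : H →ₗ[k] H) (ℓ : ℕ) : ℕ → (H →ₗ[k] H)
  | 0 => convOne k H
  | (m + 1) => conv k H (gammaFrom T ℓ m) (T ^ (ℓ + m))

/-- `gamma T m` is the map `Γ_m = μ^m ∘ (Id ⊗ T ⊗ T² ⊗ ⋯ ⊗ T^{m-1}) ∘ Δ^{m-1}`. -/
def gamma (T : H →ₗ[k] H) (m : ℕ) : H →ₗ[k] H := gammaFrom k H T 0 m

/-- The inverse of the antipode, given that the antipode is bijective. -/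
def antipodeInv (hS : Function.Bijective (HopfAlgebra.antipode (R := k) (A := H))) :
    H →ₗ[k] H :=
  (LinearEquiv.ofBijective (HopfAlgebra.antipode (R := k) (A := H)) hS).symm

/-- The map `S⁻² ∘ τ`. -/
def twist (hS : Function.Bijective (HopfAlgebra.antipode (R := k) (A := H)))
    (τ : H →ₗ[k] H) : H →ₗ[k] H :=
  antipodeInv k H hS ∘ₗ antipodeInv k H hS ∘ₗ τ

/-- `f : H → H` has exact (finite) order `r`. -/
def HasOrder (τ : H → H) (r : ℕ) : Prop :=
  0 < r ∧ τ^[r] = id ∧ ∀ s : ℕ, 0 < s → s < r → τ^[s] ≠ id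

/-- The map `Γ_m` acts on the `H`-module `V` as `ε·Id_V`. -/
def GammaTrivOn (T : H →ₗ[k] H) (m : ℕ)
    (V : Type*) [AddCommGroup V] [Module k V] [Module H V] [IsScalarTower k H V] : Prop :=
  ∀ (h : H) (v : V), gamma k H T m h • v = Coalgebra.counit (R := k) h • v

end TwistedExponent


namespace Stmt6Aux

open Coalgebra HopfAlgebra TwistedExponent

set_option synthInstance.maxHeartbeats 1000000
set_option maxHeartbeats 1000000

variable {k : Type*} [CommRing k] {H : Type*} [Ring H] [HopfAlgebra k H]

section General

variable {A : Type*} [Ring A] [Algebra k A]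

/-- General convolution with values in any `k`-algebra `A`. -/
def cconv (f g : H →ₗ[k] A) : H →ₗ[k] A :=
  LinearMap.mul' k A ∘ₗ TensorProduct.map f g ∘ₗ Coalgebra.comul

/-- General convolution unit. -/
def cone : H →ₗ[k] A := Algebra.linearMap k A ∘ₗ Coalgebra.counit

lemma cconv_repr (f g : H →ₗ[k] A) {h : H} {ι : Type*} (re : Coalgebra.Repr k h ι) :
    cconv f g h = ∑ i ∈ re.index, f (re.left i) * g (re.right i) := by
  simp only [cconv, LinearMap.comp_apply, ← re.eq, map_sum, TensorProduct.map_tmul,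
    LinearMap.mul'_apply]

lemma cone_apply (h : H) : (cone : H →ₗ[k] A) h = algebraMap k A (Coalgebra.counit (R := k) h) :=
  rfl

lemma sum_counit_smul {h : H} {ι : Type*} (re : Coalgebra.Repr k h ι) :
    ∑ i ∈ re.index, Coalgebra.counit (R := k) (re.left i) • re.right i = h := by
  have := congrArg (TensorProduct.lid k H) (Coalgebra.sum_counit_tmul_eq re)
  simp only [map_sum, TensorProduct.lid_tmul, one_smul] at this
  exact this

lemma sum_smul_counit {h : H} {ι : Type*} (re : Coalgebra.Repr k h ι) :
    ∑ i ∈ re.index, Coalgebra.counit (R := k) (re.right i) • re.left i = h := by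
  have := congrArg (TensorProduct.rid k H) (Coalgebra.sum_tmul_counit_eq re)
  simp only [map_sum, TensorProduct.rid_tmul, one_smul] at this
  exact this

lemma cone_cconv (f : H →ₗ[k] A) : cconv (cone) f = f := by
  ext h
  rw [cconv_repr _ _ (ℛ k h)]
  calc ∑ i ∈ (ℛ k h).index, cone ((ℛ k h).left i) * f ((ℛ k h).right i)
      = ∑ i ∈ (ℛ k h).index,
          Coalgebra.counit (R := k) ((ℛ k h).left i) • f ((ℛ k h).right i) := by
        simp [cone_apply, Algebra.smul_def]
    _ = f h := by
        conv_rhs => rw [← sum_counit_smul (ℛ k h)]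
        simp only [map_sum, map_smul]

lemma cconv_cone (f : H →ₗ[k] A) : cconv f (cone) = f := by
  ext h
  rw [cconv_repr _ _ (ℛ k h)]
  calc ∑ i ∈ (ℛ k h).index, f ((ℛ k h).left i) * cone ((ℛ k h).right i)
      = ∑ i ∈ (ℛ k h).index,
          Coalgebra.counit (R := k) ((ℛ k h).right i) • f ((ℛ k h).left i) := by
        simp only [cone_apply]
        refine Finset.sum_congr rfl fun i _ => ?_
        rw [← Algebra.commutes, ← Algebra.smul_def]
    _ = f h := by
        conv_rhs => rw [← sum_smul_counit (ℛ k h)]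
        simp only [map_sum, map_smul]

lemma cconv_assoc (f g e : H →ₗ[k] A) : cconv (cconv f g) e = cconv f (cconv g e) := by
  ext h
  set re := ℛ k h with hre
  set rl : ∀ i, Coalgebra.Repr k (re.left i) (H × H) := fun i => ℛ k (re.left i) with hrl
  set rr : ∀ i, Coalgebra.Repr k (re.right i) (H × H) := fun i => ℛ k (re.right i) with hrr
  have key := Coalgebra.sum_tmul_tmul_eq re rl rr
  have key2 := congrArg (LinearMap.mul' k A ∘ₗ
    TensorProduct.map f (LinearMap.mul' k A ∘ₗ TensorProduct.map g e)) key
  simp only [map_sum, LinearMap.comp_apply, TensorProduct.map_tmul,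
    LinearMap.mul'_apply] at key2
  rw [cconv_repr _ _ re, cconv_repr _ _ re]
  calc ∑ i ∈ re.index, (cconv f g) (re.left i) * e (re.right i)
      = ∑ i ∈ re.index, ∑ j ∈ (rl i).index,
          f ((rl i).left j) * ((g ((rl i).right j)) * e (re.right i)) := by
        refine Finset.sum_congr rfl fun i _ => ?_
        rw [cconv_repr _ _ (rl i), Finset.sum_mul]
        simp only [mul_assoc]
    _ = ∑ i ∈ re.index, ∑ j ∈ (rr i).index,
          f (re.left i) * (g ((rr i).left j) * e ((rr i).right j)) := key2
    _ = ∑ i ∈ re.index, f (re.left i) * (cconv g e) (re.right i) := by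
        refine Finset.sum_congr rfl fun i _ => ?_
        rw [cconv_repr _ _ (rr i), Finset.mul_sum]

/-- `φ` is a coalgebra endomorphism of `H` (pointwise form). -/
def IsCoalgEndo (φ : H →ₗ[k] H) : Prop :=
  (∀ x : H, Coalgebra.counit (R := k) (φ x) = Coalgebra.counit (R := k) x) ∧
  (∀ x : H, Coalgebra.comul (R := k) (φ x) = TensorProduct.map φ φ (Coalgebra.comul x))

lemma cconv_comp (f g : H →ₗ[k] A) {φ : H →ₗ[k] H} (hφ : IsCoalgEndo φ) :
    cconv f g ∘ₗ φ = cconv (f ∘ₗ φ) (g ∘ₗ φ) := by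
  ext h
  simp only [cconv, LinearMap.comp_apply, hφ.2 h]
  rw [← LinearMap.comp_apply (TensorProduct.map f g), ← TensorProduct.map_comp]

lemma cone_comp {φ : H →ₗ[k] H} (hφ : IsCoalgEndo φ) :
    (cone : H →ₗ[k] A) ∘ₗ φ = cone := by
  ext h
  simp only [LinearMap.comp_apply, cone_apply, hφ.1 h]

end General

lemma isCoalgEndo_id : IsCoalgEndo (LinearMap.id : H →ₗ[k] H) := by
  constructor
  · intro x; rfl
  · intro x
    simp [TensorProduct.map_id]

lemma IsCoalgEndo.comp {φ ψ : H →ₗ[k] H} (hφ : IsCoalgEndo φ) (hψ : IsCoalgEndo ψ) :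
    IsCoalgEndo (φ ∘ₗ ψ) := by
  refine ⟨fun x => ?_, fun x => ?_⟩
  · simp only [LinearMap.comp_apply, hφ.1, hψ.1]
  · simp only [LinearMap.comp_apply, hφ.2, hψ.2]
    rw [← LinearMap.comp_apply (TensorProduct.map φ φ), ← TensorProduct.map_comp]

lemma IsCoalgEndo.pow {φ : H →ₗ[k] H} (hφ : IsCoalgEndo φ) (n : ℕ) : IsCoalgEndo (φ ^ n) := by
  induction n with
  | zero => rw [pow_zero, Module.End.one_eq_id]; exact isCoalgEndo_id
  | succ n ih =>
      rw [pow_succ, Module.End.mul_eq_comp]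
      exact ih.comp hφ

section Antipode

/-- `Δ ∘ S`. -/
abbrev antiF : H →ₗ[k] H ⊗[k] H := Coalgebra.comul ∘ₗ antipode (R := k)

/-- `(S ⊗ S) ∘ swap ∘ Δ`. -/
abbrev antiG : H →ₗ[k] H ⊗[k] H :=
  TensorProduct.map (antipode (R := k)) (antipode (R := k)) ∘ₗ
    (TensorProduct.comm k H H).toLinearMap ∘ₗ Coalgebra.comul

/-- The auxiliary four-fold multiplication map `a ⊗ (b ⊗ (c ⊗ d)) ↦ S(b)c ⊗ S(a)d`. -/
def Omega : H ⊗[k] (H ⊗[k] (H ⊗[k] H)) →ₗ[k] H ⊗[k] H :=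
  TensorProduct.map (LinearMap.mul' k H) (LinearMap.mul' k H) ∘ₗ
  (TensorProduct.tensorTensorTensorComm k H H H H).toLinearMap ∘ₗ
  LinearMap.rTensor (H ⊗[k] H)
    (TensorProduct.map (antipode (R := k)) (antipode (R := k)) ∘ₗ
      (TensorProduct.comm k H H).toLinearMap) ∘ₗ
  (TensorProduct.assoc k H H (H ⊗[k] H)).symm.toLinearMap

lemma Omega_apply1 (x y : H) (u : H ⊗[k] H) :
    Omega (x ⊗ₜ (y ⊗ₜ u)) =
      ((antipode (R := k) y) ⊗ₜ (antipode (R := k) x)) * u := by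
  induction u using TensorProduct.induction_on with
  | zero => simp only [TensorProduct.tmul_zero, map_zero, mul_zero]
  | tmul c d =>
      simp [Omega, Algebra.TensorProduct.tmul_mul_tmul]
  | add u v hu hv =>
      simp only [TensorProduct.tmul_add, map_add, hu, hv, mul_add]

lemma Omega_apply2 (x d : H) (u : H ⊗[k] H) :
    Omega (x ⊗ₜ ((TensorProduct.assoc k H H H) (u ⊗ₜ d))) =
      (LinearMap.mul' k H (LinearMap.rTensor H (antipode (R := k)) u)) ⊗ₜ
        ((antipode (R := k) x) * d) := by
  induction u using TensorProduct.induction_on with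
  | zero => simp only [TensorProduct.zero_tmul, map_zero, TensorProduct.tmul_zero,
      LinearMap.map_zero]
  | tmul a b =>
      simp [Omega, Algebra.TensorProduct.tmul_mul_tmul]
  | add u v hu hv =>
      rw [TensorProduct.add_tmul, map_add, TensorProduct.tmul_add, map_add, hu, hv,
        map_add, map_add, TensorProduct.add_tmul]

lemma claim1 : cconv (Coalgebra.comul) (antiF (k := k) (H := H)) = cone := by
  ext h
  rw [cconv_repr _ _ (ℛ k h)]
  have : ∀ i ∈ (ℛ k h).index,
      (Coalgebra.comul ((ℛ k h).left i)) * (antiF (k := k) ((ℛ k h).right i))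
      = Coalgebra.comul (R := k) ((ℛ k h).left i * antipode (R := k) ((ℛ k h).right i)) := by
    intro i _
    rw [Bialgebra.comul_mul]
    rfl
  rw [Finset.sum_congr rfl this, ← map_sum, HopfAlgebra.sum_mul_antipode_eq_algebraMap_counit (ℛ k h)]
  show _ = algebraMap k (H ⊗[k] H) _
  rw [Algebra.algebraMap_eq_smul_one, map_smul, Bialgebra.comul_one,
    Algebra.algebraMap_eq_smul_one]

lemma claim2 : cconv (antiG (k := k) (H := H)) (Coalgebra.comul) = cone := by
  ext h
  set re := ℛ k h with hre
  set rl : ∀ i, Coalgebra.Repr k (re.left i) (H × H) := fun i => ℛ k (re.left i) with hrl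
  set rr : ∀ i, Coalgebra.Repr k (re.right i) (H × H) := fun i => ℛ k (re.right i) with hrr
  have key := Coalgebra.sum_tmul_tmul_eq re rl rr
  have key2 := congrArg (Omega (k := k) (H := H) ∘ₗ
    LinearMap.lTensor H (LinearMap.lTensor H (Coalgebra.comul))) key
  simp only [map_sum, LinearMap.comp_apply, LinearMap.lTensor_tmul] at key2
  rw [cconv_repr _ _ re]
  calc ∑ i ∈ re.index, antiG (k := k) (re.left i) * Coalgebra.comul (re.right i)
      = ∑ i ∈ re.index, ∑ j ∈ (rl i).index,
          Omega ((rl i).left j ⊗ₜ ((rl i).right j ⊗ₜ Coalgebra.comul (re.right i))) := by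
        refine Finset.sum_congr rfl fun i _ => ?_
        have : antiG (k := k) (re.left i) = ∑ j ∈ (rl i).index,
            (antipode (R := k) ((rl i).right j)) ⊗ₜ[k] (antipode (R := k) ((rl i).left j)) := by
          simp only [antiG, LinearMap.comp_apply, ← (rl i).eq, map_sum,
            TensorProduct.comm_tmul, TensorProduct.map_tmul, LinearEquiv.coe_coe]
        rw [this, Finset.sum_mul]
        exact Finset.sum_congr rfl fun j _ => (Omega_apply1 _ _ _).symm
    _ = ∑ i ∈ re.index, ∑ j ∈ (rr i).index,
          Omega ((re.left i) ⊗ₜ ((rr i).left j ⊗ₜ Coalgebra.comul ((rr i).right j))) := key2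
    _ = ∑ i ∈ re.index,
          Omega ((re.left i) ⊗ₜ (TensorProduct.assoc k H H H)
            ((LinearMap.rTensor H (Coalgebra.comul)) (Coalgebra.comul (re.right i)))) := by
        refine Finset.sum_congr rfl fun i _ => ?_
        rw [Coalgebra.coassoc_apply]
        rw [← (rr i).eq]
        simp only [map_sum, LinearMap.lTensor_tmul, TensorProduct.tmul_sum]
    _ = ∑ i ∈ re.index, ∑ j ∈ (rr i).index,
          (algebraMap k H (Coalgebra.counit ((rr i).left j))) ⊗ₜ[k]
            (antipode (R := k) (re.left i) * (rr i).right j) := by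
        refine Finset.sum_congr rfl fun i _ => ?_
        rw [← (rr i).eq]
        simp only [map_sum, LinearMap.rTensor_tmul, TensorProduct.sum_tmul,
          TensorProduct.tmul_sum]
        refine Finset.sum_congr rfl fun j _ => ?_
        rw [Omega_apply2, HopfAlgebra.mul_antipode_rTensor_comul_apply]
    _ = ∑ i ∈ re.index, (1 : H) ⊗ₜ[k] (antipode (R := k) (re.left i) * re.right i) := by
        refine Finset.sum_congr rfl fun i _ => ?_
        have : ∀ j ∈ (rr i).index,
            (algebraMap k H (Coalgebra.counit ((rr i).left j))) ⊗ₜ[k]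
              (antipode (R := k) (re.left i) * (rr i).right j)
            = (1 : H) ⊗ₜ[k] (antipode (R := k) (re.left i) *
                (Coalgebra.counit (R := k) ((rr i).left j) • (rr i).right j)) := by
          intro j _
          rw [Algebra.algebraMap_eq_smul_one, mul_smul_comm, TensorProduct.smul_tmul]
        rw [Finset.sum_congr rfl this, ← TensorProduct.tmul_sum, ← Finset.mul_sum,
          sum_counit_smul (rr i)]
    _ = cone h := by
        rw [← TensorProduct.tmul_sum, HopfAlgebra.sum_antipode_mul_eq_algebraMap_counit re]
        show _ = algebraMap k (H ⊗[k] H) _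
        rw [Algebra.TensorProduct.algebraMap_apply, Algebra.algebraMap_eq_smul_one,
          TensorProduct.smul_tmul]

/-- The antipode is an anti-coalgebra morphism. -/
lemma antiF_eq_antiG : antiF (k := k) (H := H) = antiG := by
  calc antiF (k := k) (H := H)
      = cconv cone antiF := (cone_cconv _).symm
    _ = cconv (cconv antiG Coalgebra.comul) antiF := by rw [claim2]
    _ = cconv antiG (cconv Coalgebra.comul antiF) := cconv_assoc _ _ _
    _ = cconv antiG cone := by rw [claim1]
    _ = antiG := cconv_cone _

lemma comul_antipode (x : H) :
    Coalgebra.comul (R := k) (antipode (R := k) x) =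
      TensorProduct.map (antipode (R := k)) (antipode (R := k))
        ((TensorProduct.comm k H H) (Coalgebra.comul x)) :=
  LinearMap.congr_fun (antiF_eq_antiG (k := k) (H := H)) x

lemma counit_antipode (x : H) :
    Coalgebra.counit (R := k) (antipode (R := k) (A := H) x) = Coalgebra.counit (R := k) x := by
  conv_lhs => rw [← sum_smul_counit (ℛ k x)]
  rw [map_sum, map_sum]
  have : ∀ i ∈ (ℛ k x).index,
      Coalgebra.counit (R := k)
        (antipode (R := k) (Coalgebra.counit (R := k) ((ℛ k x).right i) • (ℛ k x).left i))
      = Coalgebra.counit (R := k) (antipode (R := k) ((ℛ k x).left i) * (ℛ k x).right i) := by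
    intro i _
    rw [map_smul, map_smul, Bialgebra.counit_mul, smul_eq_mul, mul_comm]
  rw [Finset.sum_congr rfl this, ← map_sum, HopfAlgebra.sum_antipode_mul_eq_algebraMap_counit (ℛ k x),
    Algebra.algebraMap_eq_smul_one, map_smul, Bialgebra.counit_one, smul_eq_mul, mul_one]

end Antipode

section Twist

open TwistedExponent

variable (hS : Function.Bijective (HopfAlgebra.antipode (R := k) (A := H)))

lemma antipode_antipodeInv (x : H) :
    antipode (R := k) (antipodeInv k H hS x) = x :=
  (LinearEquiv.ofBijective (antipode (R := k) (A := H)) hS).apply_symm_apply x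

lemma antipodeInv_antipode (x : H) :
    antipodeInv k H hS (antipode (R := k) x) = x :=
  (LinearEquiv.ofBijective (antipode (R := k) (A := H)) hS).symm_apply_apply x

lemma counit_antipodeInv (x : H) :
    Coalgebra.counit (R := k) (antipodeInv k H hS x) = Coalgebra.counit (R := k) x := by
  conv_rhs => rw [← antipode_antipodeInv hS x, counit_antipode]

lemma comm_map_comm {φ ψ : H →ₗ[k] H} (u : H ⊗[k] H) :
    (TensorProduct.comm k H H) (TensorProduct.map φ ψ u) =
      TensorProduct.map ψ φ ((TensorProduct.comm k H H) u) := by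
  induction u using TensorProduct.induction_on with
  | zero => simp
  | tmul a b => simp
  | add u v hu hv => simp [hu, hv]

lemma comm_comm (u : H ⊗[k] H) :
    (TensorProduct.comm k H H) ((TensorProduct.comm k H H) u) = u := by
  induction u using TensorProduct.induction_on with
  | zero => simp
  | tmul a b => simp
  | add u v hu hv => simp [hu, hv]

lemma comul_antipodeInv (x : H) :
    Coalgebra.comul (R := k) (antipodeInv k H hS x) =
      (TensorProduct.comm k H H)
        (TensorProduct.map (antipodeInv k H hS) (antipodeInv k H hS) (Coalgebra.comul x)) := by
  have hid : antipodeInv k H hS ∘ₗ antipode (R := k) = (LinearMap.id : H →ₗ[k] H) :=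
    LinearMap.ext (antipodeInv_antipode hS)
  have h2 : TensorProduct.map (antipodeInv k H hS) (antipodeInv k H hS)
      (Coalgebra.comul (R := k) x) =
      (TensorProduct.comm k H H) (Coalgebra.comul (antipodeInv k H hS x)) := by
    conv_lhs => rw [← antipode_antipodeInv hS x, comul_antipode]
    rw [← LinearMap.comp_apply, ← TensorProduct.map_comp, hid, TensorProduct.map_id,
      LinearMap.id_apply]
  rw [h2, comm_comm]


lemma isCoalgEndo_antipodeInvSq :
    IsCoalgEndo (antipodeInv k H hS ∘ₗ antipodeInv k H hS) := by
  constructor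
  · intro x
    simp only [LinearMap.comp_apply, counit_antipodeInv hS]
  · intro x
    simp only [LinearMap.comp_apply]
    rw [comul_antipodeInv hS, comul_antipodeInv hS, comm_map_comm, comm_comm,
      ← LinearMap.comp_apply (TensorProduct.map _ _), ← TensorProduct.map_comp]

lemma isCoalgEndo_coe (τ : H ≃ₐc[k] H) : IsCoalgEndo (τ : H →ₗ[k] H) := by
  constructor
  · intro x
    exact CoalgHomClass.counit_comp_apply τ x
  · intro x
    exact (CoalgHomClass.map_comp_comul_apply τ x).symm

lemma isCoalgEndo_twist (τ : H ≃ₐc[k] H) :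
    IsCoalgEndo (twist k H hS (τ : H →ₗ[k] H)) := by
  have : twist k H hS (τ : H →ₗ[k] H) =
      (antipodeInv k H hS ∘ₗ antipodeInv k H hS) ∘ₗ (τ : H →ₗ[k] H) := by
    rw [twist, LinearMap.comp_assoc]
  rw [this]
  exact (isCoalgEndo_antipodeInvSq hS).comp (isCoalgEndo_coe τ)

lemma conv_eq_cconv (f g : H →ₗ[k] H) : conv k H f g = cconv f g := rfl

lemma convOne_eq_cone : convOne k H = (cone : H →ₗ[k] H) := rfl

lemma gammaFrom_shift (T : H →ₗ[k] H) (hT : IsCoalgEndo T) (ℓ m : ℕ) :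
    gammaFrom k H T ℓ m = gammaFrom k H T 0 m ∘ₗ (T ^ ℓ) := by
  induction m with
  | zero =>
      show convOne k H = convOne k H ∘ₗ T ^ ℓ
      rw [convOne_eq_cone, cone_comp (hT.pow ℓ)]
  | succ m ih =>
      show conv k H (gammaFrom k H T ℓ m) (T ^ (ℓ + m)) =
        conv k H (gammaFrom k H T 0 m) (T ^ (0 + m)) ∘ₗ T ^ ℓ
      have hpow : T ^ (ℓ + m) = (T ^ (0 + m)) ∘ₗ T ^ ℓ := by
        rw [zero_add, ← Module.End.mul_eq_comp, ← pow_add, add_comm]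
      rw [conv_eq_cconv, conv_eq_cconv, cconv_comp _ _ (hT.pow ℓ), ih, hpow]

end Twist

end Stmt6Aux

open TwistedExponent

/-- Let `H` be a Hopf algebra over a field `k` with bijective antipode `S`,
`τ` a Hopf algebra automorphism of `H` of finite order `r`, and `(V, ρ)` a finite-dimensional
left `H`-module with `e = exp_τ(V)` finite.  Then for every `ℓ ≥ 0` and every `h ∈ H` the
shifted twisted power acts trivially:
`ρ(μ^{er} ∘ ((S⁻²τ)^ℓ ⊗ (S⁻²τ)^{ℓ+1} ⊗ ⋯ ⊗ (S⁻²τ)^{ℓ+er-1}) ∘ Δ^{er-1}(h)) = ε(h)·Id_V`. -/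
theorem stmt6 {k H : Type*} [Field k] [Ring H] [HopfAlgebra k H]
    (hS : Function.Bijective (HopfAlgebra.antipode (R := k) (A := H)))
    (τ : H ≃ₐc[k] H) (r : ℕ) (hr : HasOrder H (⇑τ) r)
    (V : Type*) [AddCommGroup V] [Module k V] [Module H V] [IsScalarTower k H V]
    [FiniteDimensional k V]
    (e : ℕ)
    (he : IsLeast {n : ℕ | 0 < n ∧
      GammaTrivOn k H (twist k H hS (τ : H →ₗ[k] H)) (n * r) V} e) :
    ∀ (ℓ : ℕ) (h : H) (v : V),
      gammaFrom k H (twist k H hS (τ : H →ₗ[k] H)) ℓ (e * r) h • v =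
        Coalgebra.counit (R := k) h • v := by
  intro ℓ h v
  have hend : Stmt6Aux.IsCoalgEndo (twist k H hS (τ : H →ₗ[k] H)) :=
    Stmt6Aux.isCoalgEndo_twist hS τ
  rw [Stmt6Aux.gammaFrom_shift _ hend ℓ (e * r), LinearMap.comp_apply]
  have h2 := he.1.2 (((twist k H hS (τ : H →ₗ[k] H)) ^ ℓ) h) v
  rw [gamma] at h2
  rw [h2, (hend.pow ℓ).1 h]
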